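/- Let X be a loopless graph on n vertices and let μ be the greatest eigenvalue of its Laplacian matrix L = D − A. For any independent set S of size s with average degree d̄_S = (1/s)·Σ_{i∈S} d_i, we have s ≤ n·(μ − d̄_S)/μ, provided μ > 0. -/

import Mathlib

open Matrix Finset

lemma rayleigh_aux {n : ℕ} (L : Matrix (Fin n) (Fin n) ℝ) (hL : L.IsHermitian)
    (μ : ℝ)
    (hμmax : ∀ (ν : ℝ) (v : Fin n → ℝ), v ≠ 0 → L.mulVec v = ν • v → ν ≤ μ)
    (x : Fin n → ℝ) : x ⬝ᵥ L.mulVec x ≤ μ * (x ⬝ᵥ x) := by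
  set M : Matrix (Fin n) (Fin n) ℝ := μ • (1 : Matrix (Fin n) (Fin n) ℝ) - L with hM
  have hMh : M.IsHermitian := by
    refine Matrix.IsHermitian.sub ?_ hL
    show (μ • (1 : Matrix (Fin n) (Fin n) ℝ))ᴴ = _
    simp [Matrix.conjTranspose_smul]
  have hpsd : M.PosSemidef := by
    refine hMh.posSemidef_iff_eigenvalues_nonneg.mpr (fun i => show (0:ℝ) ≤ hMh.eigenvalues i from ?_)
    set v : Fin n → ℝ := ⇑(hMh.eigenvectorBasis i) with hv
    have hv0 : v ≠ 0 := by
      intro h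
      have h1 : ‖hMh.eigenvectorBasis i‖ = 1 := hMh.eigenvectorBasis.orthonormal.1 i
      have : (hMh.eigenvectorBasis i) = 0 := by
        ext j; exact congrFun h j
      rw [this] at h1; simp at h1
    have heig : M.mulVec v = hMh.eigenvalues i • v := hMh.mulVec_eigenvectorBasis i
    have hLv : L.mulVec v = (μ - hMh.eigenvalues i) • v := by
      have : M.mulVec v = μ • v - L.mulVec v := by
        rw [hM, Matrix.sub_mulVec, Matrix.smul_mulVec, Matrix.one_mulVec]
      rw [this] at heig
      rw [sub_smul]
      linear_combination (norm := module) -heig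
    have := hμmax _ v hv0 hLv
    linarith
  have := hpsd.dotProduct_mulVec_nonneg x
  have hMx : M.mulVec x = μ • x - L.mulVec x := by
    rw [hM, Matrix.sub_mulVec, Matrix.smul_mulVec, Matrix.one_mulVec]
  rw [hMx, star_trivial, dotProduct_sub, dotProduct_smul] at this
  simpa [smul_eq_mul] using this


/-- Laplacian bound: in a loopless graph with largest Laplacian eigenvalue `μ > 0`,
an independent set `S` of size `s` with average degree `d̄_S` satisfies
`s ≤ n (μ − d̄_S)/μ`. -/
theorem stmt4 (n : ℕ) (hn : 0 < n)
    (A : Matrix (Fin n) (Fin n) ℝ) (hsym : A.IsSymm)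
    (h01 : ∀ i j, A i j = 0 ∨ A i j = 1) (hloop : ∀ i, A i i = 0)
    (L : Matrix (Fin n) (Fin n) ℝ)
    (hL : L = Matrix.diagonal (fun i => ∑ j, A i j) - A)
    (μ : ℝ) (hμpos : 0 < μ)
    (hμeig : ∃ v : Fin n → ℝ, v ≠ 0 ∧ L.mulVec v = μ • v)
    (hμmax : ∀ (ν : ℝ) (v : Fin n → ℝ), v ≠ 0 → L.mulVec v = ν • v → ν ≤ μ)
    (S : Finset (Fin n)) (hSne : S.Nonempty)
    (hind : ∀ i ∈ S, ∀ j ∈ S, i ≠ j → A i j = 0)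
    (dbar : ℝ) (hdbar : dbar = (∑ i ∈ S, ∑ j, A i j) / S.card) :
    (S.card : ℝ) ≤ n * (μ - dbar) / μ := by
  have hLh : L.IsHermitian := by
    rw [hL]
    refine Matrix.IsHermitian.sub ?_ ?_
    · exact (Matrix.isHermitian_diagonal _)
    · exact hsym
  -- row sums of L are zero
  have hrow : ∀ i, ∑ j, L i j = 0 := by
    intro i
    simp only [hL, Matrix.sub_apply, Finset.sum_sub_distrib]
    have : ∑ j, Matrix.diagonal (fun i => ∑ j, A i j) i j = ∑ j, A i j := by
      rw [Finset.sum_eq_single i] <;> simp [Matrix.diagonal]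
      intro b hb; exact fun h => absurd h.symm hb
    rw [this]; ring
  have hcol : ∀ j, ∑ i, L i j = 0 := by
    intro j
    have : ∀ i, L i j = L j i := fun i => (hLh.apply i j).symm
    simp_rw [this]
    exact hrow j
  set s : ℝ := (S.card : ℝ) with hs
  have hspos : 0 < s := by
    have := Finset.card_pos.mpr hSne
    positivity
  have hnpos : (0:ℝ) < n := by exact_mod_cast hn
  set t : ℝ := s / n with ht
  set c : Fin n → ℝ := fun i => if i ∈ S then 1 else 0 with hc
  set x : Fin n → ℝ := fun i => c i - t with hx
  have key : x ⬝ᵥ L.mulVec x ≤ μ * (x ⬝ᵥ x) := rayleigh_aux L hLh μ hμmax x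
  -- L.mulVec x = L.mulVec c
  have hLx : L.mulVec x = L.mulVec c := by
    funext i
    simp only [Matrix.mulVec, dotProduct, hx]
    rw [show ∀ f : Fin n → ℝ, ∑ j, L i j * (f j - t) = ∑ j, L i j * f j - t * ∑ j, L i j
      from fun f => by rw [Finset.mul_sum, ← Finset.sum_sub_distrib]; congr 1; ext j; ring]
    rw [hrow]; ring
  -- total sum of L.mulVec c is zero
  have hsumLc : ∑ i, L.mulVec c i = 0 := by
    simp only [Matrix.mulVec, dotProduct]
    rw [Finset.sum_comm]
    have : ∀ j, ∑ i, L i j * c j = 0 := by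
      intro j; rw [← Finset.sum_mul, hcol]; ring
    simp_rw [this, Finset.sum_const_zero]
  -- quadratic form value
  have hsum_ind : ∀ f : Fin n → ℝ, ∑ i, (if i ∈ S then (1:ℝ) else 0) * f i
      = ∑ i ∈ S, f i := by
    intro f
    simp_rw [ite_mul, one_mul, zero_mul]
    rw [Finset.sum_ite_mem, Finset.univ_inter]
  have hq : c ⬝ᵥ L.mulVec c = ∑ i ∈ S, ∑ j, A i j := by
    simp only [dotProduct, hc]
    rw [hsum_ind]
    refine Finset.sum_congr rfl (fun i hi => ?_)
    simp only [Matrix.mulVec, dotProduct]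
    have : ∀ j, L i j * (if j ∈ S then (1:ℝ) else 0) = if j ∈ S then L i j else 0 := by
      intro j; split <;> ring
    simp_rw [this]
    rw [Finset.sum_ite_mem, Finset.univ_inter, Finset.sum_eq_single_of_mem i hi]
    · simp [hL, Matrix.diagonal, hloop i]
    · intro j hj hne
      simp [hL, Matrix.diagonal, hne.symm, hind i hi j hj hne.symm]
  -- norm computations
  have hsc : ∑ i, c i = s := by
    simp [hc, hs]
  have hxx : x ⬝ᵥ x = s - 2*t*s + n*t^2 := by
    simp only [dotProduct, hx]
    have hexp : ∀ i, (c i - t) * (c i - t) = c i - 2*t*(c i) + t^2 := by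
      intro i
      have : c i * c i = c i := by simp only [hc]; split <;> ring
      nlinarith [this]
    simp_rw [hexp]
    rw [Finset.sum_add_distrib, Finset.sum_sub_distrib, hsc, ← Finset.mul_sum, hsc]
    simp [Finset.card_univ]
  have hxLx : x ⬝ᵥ L.mulVec x = ∑ i ∈ S, ∑ j, A i j := by
    rw [hLx, ← hq]
    simp only [dotProduct, hx]
    rw [show ∑ i, (c i - t) * L.mulVec c i
        = ∑ i, c i * L.mulVec c i - t * ∑ i, L.mulVec c i from by
      rw [Finset.mul_sum, ← Finset.sum_sub_distrib]; congr 1; ext i; ring]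
    rw [hsumLc]; ring
  -- conclude
  have hds : ∑ i ∈ S, ∑ j, A i j = s * dbar := by
    rw [hdbar]
    field_simp
  rw [hxLx, hxx, hds] at key
  have htn : t * (n:ℝ) = s := by
    rw [ht]; field_simp
  have key2 : s * dbar * (n:ℝ) ≤ μ * (s * (n:ℝ) - s * s) :=
    calc s * dbar * (n:ℝ) ≤ μ * (s - 2*t*s + (n:ℝ)*t^2) * (n:ℝ) :=
          mul_le_mul_of_nonneg_right key hnpos.le
      _ = μ * (s * (n:ℝ) - s * s) := by
          linear_combination μ * ((n:ℝ)*t - s) * htn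
  rw [le_div_iff₀ hμpos]
  nlinarith [key2, hspos, hnpos, mul_pos hspos hμpos]
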